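/- arXiv:2312.11267 — 4 statements merged into one kernel-verified Lean document; each statement's English description precedes it below -/
import Mathlib

section
/- If M_n(y) is positive semidefinite and y = ∑_{J ⊆ X} α_J χ^J is the expansion of y in the basis of characteristic vectors, then each coefficient α_J is nonnegative; indeed α_J = (ψ^J)^T M_n(y) ψ^J where ψ^J is the dual basis vector. -/
lemma dual_basis_sum {X : Type*} [Fintype X] [DecidableEq X] (J J₀ : Finset X) :
    ∑ J' : Finset X, (if J ⊆ J' then (-1 : ℝ) ^ (J' \ J).card else 0) *
      (if J' ⊆ J₀ then (1 : ℝ) else 0) = if J = J₀ then 1 else 0 := by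
  classical
  have hterm : ∀ J' : Finset X,
      (if J ⊆ J' then (-1 : ℝ) ^ (J' \ J).card else 0) *
        (if J' ⊆ J₀ then (1 : ℝ) else 0)
      = if J ⊆ J' ∧ J' ⊆ J₀ then (-1 : ℝ) ^ (J' \ J).card else 0 := by
    intro J'; split_ifs <;> simp_all
  simp_rw [hterm]
  rw [Finset.sum_ite, Finset.sum_const_zero, add_zero]
  by_cases h : J ⊆ J₀
  · have hinj : Set.InjOn (fun T => J ∪ T) ((J₀ \ J).powerset : Finset (Finset X)) := by
      intro a ha b hb hab
      rw [Finset.mem_coe, Finset.mem_powerset] at ha hb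
      have ha' : Disjoint J a := Finset.disjoint_of_subset_right ha Finset.disjoint_sdiff
      have hb' : Disjoint J b := Finset.disjoint_of_subset_right hb Finset.disjoint_sdiff
      rw [← Finset.union_sdiff_cancel_left ha', ← Finset.union_sdiff_cancel_left hb']
      simp only at hab
      rw [hab]
    have himg : Finset.univ.filter (fun J' : Finset X => J ⊆ J' ∧ J' ⊆ J₀)
        = (J₀ \ J).powerset.image (fun T => J ∪ T) := by
      ext J'
      simp only [Finset.mem_image, Finset.mem_powerset, Finset.mem_filter,
        Finset.mem_univ, true_and]
      constructor
      · rintro ⟨h1, h2⟩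
        exact ⟨J' \ J, Finset.sdiff_subset_sdiff h2 subset_rfl,
          Finset.union_sdiff_of_subset h1⟩
      · rintro ⟨T, hT, rfl⟩
        exact ⟨Finset.subset_union_left,
          Finset.union_subset h (hT.trans Finset.sdiff_subset)⟩
    rw [himg, Finset.sum_image (fun a ha b hb => hinj (Finset.mem_coe.2 ha) (Finset.mem_coe.2 hb))]
    have hcongr : ∀ T ∈ (J₀ \ J).powerset,
        (-1 : ℝ) ^ ((J ∪ T) \ J).card = (-1 : ℝ) ^ T.card := by
      intro T hT
      rw [Finset.union_sdiff_cancel_left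
        (Finset.disjoint_of_subset_right (Finset.mem_powerset.1 hT) Finset.disjoint_sdiff)]
    rw [Finset.sum_congr rfl hcongr]
    have hz := Finset.sum_powerset_neg_one_pow_card (x := J₀ \ J)
    have : (∑ m ∈ (J₀ \ J).powerset, (-1 : ℝ) ^ m.card)
        = ((∑ m ∈ (J₀ \ J).powerset, (-1 : ℤ) ^ m.card : ℤ) : ℝ) := by push_cast; rfl
    rw [this, hz]
    have : J₀ \ J = ∅ ↔ J = J₀ := by
      rw [Finset.sdiff_eq_empty_iff_subset]
      exact ⟨fun h' => subset_antisymm h h', fun h' => h' ▸ subset_rfl⟩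
    split_ifs with h1 h2 h2 <;> simp_all
  · rw [Finset.filter_false_of_mem, Finset.sum_empty]
    · have : J ≠ J₀ := fun he => h (he ▸ subset_rfl)
      simp [this]
    · intro J' _ hc
      exact absurd (hc.1.trans hc.2) h

/-- if M_n(y) ⪰ 0 then the coefficients in the χ-expansion of y are
nonnegative, indeed α_J = (ψ^J)^T M_n(y) ψ^J where ψ^J is the dual basis vector. -/
theorem expansion_coefficients_nonneg {X : Type*} [Fintype X] [DecidableEq X]
    (y : Finset X → ℝ)
    (hpsd : (Matrix.of fun J J' : Finset X => y (J ∪ J')).PosSemidef)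
    (α : Finset X → ℝ)
    (hexp : y = ∑ J : Finset X, α J • (fun J' : Finset X => if J' ⊆ J then (1 : ℝ) else 0)) :
    ∀ J : Finset X,
      (α J = ∑ J' : Finset X, ∑ J'' : Finset X,
          (if J ⊆ J' then (-1 : ℝ) ^ (J' \ J).card else 0) * y (J' ∪ J'') *
            (if J ⊆ J'' then (-1 : ℝ) ^ (J'' \ J).card else 0)) ∧
        0 ≤ α J := by
  classical
  intro J
  set v : Finset X → ℝ := fun J' => if J ⊆ J' then (-1 : ℝ) ^ (J' \ J).card else 0 with hv
  have hy : ∀ K : Finset X, y K = ∑ J₀ : Finset X, α J₀ * (if K ⊆ J₀ then (1 : ℝ) else 0) := by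
    intro K
    conv_lhs => rw [hexp]
    simp [Finset.sum_apply]
  have hsplit : ∀ J' J'' J₀ : Finset X,
      (if J' ∪ J'' ⊆ J₀ then (1 : ℝ) else 0)
        = (if J' ⊆ J₀ then (1 : ℝ) else 0) * (if J'' ⊆ J₀ then (1 : ℝ) else 0) := by
    intro J' J'' J₀; split_ifs <;> simp_all [Finset.union_subset_iff]
  have hterm : ∀ J' J'' : Finset X, v J' * y (J' ∪ J'') * v J''
      = ∑ J₀ : Finset X, α J₀ *
          ((v J' * (if J' ⊆ J₀ then (1 : ℝ) else 0)) *
            (v J'' * (if J'' ⊆ J₀ then (1 : ℝ) else 0))) := by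
    intro J' J''
    rw [hy (J' ∪ J''), Finset.mul_sum, Finset.sum_mul]
    refine Finset.sum_congr rfl fun J₀ _ => ?_
    rw [hsplit]; ring
  have key : (∑ J' : Finset X, ∑ J'' : Finset X, v J' * y (J' ∪ J'') * v J'') = α J := by
    calc (∑ J' : Finset X, ∑ J'' : Finset X, v J' * y (J' ∪ J'') * v J'')
        = ∑ J' : Finset X, ∑ J₀ : Finset X, ∑ J'' : Finset X, α J₀ *
            ((v J' * (if J' ⊆ J₀ then (1 : ℝ) else 0)) *
              (v J'' * (if J'' ⊆ J₀ then (1 : ℝ) else 0))) := by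
          refine Finset.sum_congr rfl fun J' _ => ?_
          simp_rw [hterm]
          exact Finset.sum_comm
      _ = ∑ J₀ : Finset X, ∑ J' : Finset X, ∑ J'' : Finset X, α J₀ *
            ((v J' * (if J' ⊆ J₀ then (1 : ℝ) else 0)) *
              (v J'' * (if J'' ⊆ J₀ then (1 : ℝ) else 0))) := Finset.sum_comm
      _ = ∑ J₀ : Finset X, α J₀ *
            ((∑ J' : Finset X, v J' * (if J' ⊆ J₀ then (1 : ℝ) else 0)) *
              (∑ J'' : Finset X, v J'' * (if J'' ⊆ J₀ then (1 : ℝ) else 0))) := by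
          refine Finset.sum_congr rfl fun J₀ _ => ?_
          rw [Finset.sum_mul_sum, Finset.mul_sum]
          exact Finset.sum_congr rfl fun _ _ => (Finset.mul_sum _ _ _).symm
      _ = ∑ J₀ : Finset X, α J₀ *
            ((if J = J₀ then (1 : ℝ) else 0) * (if J = J₀ then (1 : ℝ) else 0)) := by
          refine Finset.sum_congr rfl fun J₀ _ => ?_
          rw [dual_basis_sum J J₀]
      _ = α J := by simp [mul_ite, Finset.sum_ite_eq]
  constructor
  · exact key.symm
  · have h2 := hpsd.dotProduct_mulVec_nonneg v
    rw [← key]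
    simpa [dotProduct, Matrix.mulVec, Finset.mul_sum, mul_assoc] using h2
end

section
/- Let X be a finite set, J ⊆ X, and y = χ^J. For vectors a ∈ ℝ^X and b ∈ ℝ with ∑_{i ∈ J} a_i ≥ b, the localizing matrix M^a_b(y) with entries [M^a_b(y)]_{J',J''} = ∑_{i ∈ X} a_i · y(J' ∪ J'' ∪ {i}) − b · y(J' ∪ J'') equals (∑_{i ∈ J} a_i − b) · χ^J (χ^J)^T, and is therefore positive semidefinite. -/
lemma smul_vecMulVec_self_posSemidef {n : Type*} [Fintype n] (c : ℝ) (hc : 0 ≤ c)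
    (v : n → ℝ) : (c • Matrix.vecMulVec v v).PosSemidef := by
  rw [Matrix.posSemidef_iff_dotProduct_mulVec]
  constructor
  · ext i j
    simp [Matrix.vecMulVec, Matrix.conjTranspose, mul_comm]
  · intro x
    have h1 : (c • Matrix.vecMulVec v v).mulVec x = fun i => c * (v i * dotProduct v x) := by
      ext i
      simp [Matrix.mulVec, Matrix.vecMulVec, dotProduct, Finset.mul_sum, mul_assoc]
    rw [h1]
    have h2 : dotProduct (Star.star x) (fun i => c * (v i * dotProduct v x)) =
        c * (dotProduct v x * dotProduct v x) := by
      simp only [dotProduct, Pi.star_apply, star_trivial, Finset.mul_sum,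
        Finset.sum_mul]
      rw [Finset.sum_comm]
      congr 1; ext i; congr 1; ext j; ring
    rw [h2]
    exact mul_nonneg hc (mul_self_nonneg _)

/-- for y = χ^J with ∑_{i∈J} a_i ≥ b, the localizing matrix equals
(∑_{i∈J} a_i − b) χ^J (χ^J)^T and is positive semidefinite. -/
theorem localizing_matrix_of_chi {X : Type*} [Fintype X] [DecidableEq X]
    (J : Finset X) (a : X → ℝ) (b : ℝ) (hab : b ≤ ∑ i ∈ J, a i) :
    (Matrix.of fun J' J'' : Finset X =>
        (∑ i : X, a i * (if J' ∪ J'' ∪ {i} ⊆ J then (1 : ℝ) else 0)) -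
          b * (if J' ∪ J'' ⊆ J then (1 : ℝ) else 0)) =
        ((∑ i ∈ J, a i) - b) •
          Matrix.vecMulVec (fun J' : Finset X => if J' ⊆ J then (1 : ℝ) else 0)
            (fun J' : Finset X => if J' ⊆ J then (1 : ℝ) else 0) ∧
      (Matrix.of fun J' J'' : Finset X =>
        (∑ i : X, a i * (if J' ∪ J'' ∪ {i} ⊆ J then (1 : ℝ) else 0)) -
          b * (if J' ∪ J'' ⊆ J then (1 : ℝ) else 0)).PosSemidef := by
  have heq : (Matrix.of fun J' J'' : Finset X =>
        (∑ i : X, a i * (if J' ∪ J'' ∪ {i} ⊆ J then (1 : ℝ) else 0)) -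
          b * (if J' ∪ J'' ⊆ J then (1 : ℝ) else 0)) =
        ((∑ i ∈ J, a i) - b) •
          Matrix.vecMulVec (fun J' : Finset X => if J' ⊆ J then (1 : ℝ) else 0)
            (fun J' : Finset X => if J' ⊆ J then (1 : ℝ) else 0) := by
    ext J' J''
    simp only [Matrix.of_apply, Matrix.smul_apply, Matrix.vecMulVec_apply, smul_eq_mul]
    by_cases h : J' ∪ J'' ⊆ J
    · have h1 : J' ⊆ J := (Finset.union_subset_iff.mp h).1
      have h2 : J'' ⊆ J := (Finset.union_subset_iff.mp h).2
      have hsum : ∀ i : X, (if J' ∪ J'' ∪ {i} ⊆ J then (1 : ℝ) else 0) =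
          if i ∈ J then 1 else 0 := by
        intro i
        by_cases hi : i ∈ J
        · rw [if_pos hi, if_pos]
          exact Finset.union_subset h (Finset.singleton_subset_iff.mpr hi)
        · rw [if_neg hi, if_neg]
          intro hc
          exact hi (hc (by simp))
      simp only [hsum, if_pos h, if_pos h1, if_pos h2, mul_ite, mul_one, mul_zero]
      rw [Finset.sum_ite_mem, Finset.univ_inter]
    · have h1 : ¬ (J' ⊆ J ∧ J'' ⊆ J) := fun hc =>
        h (Finset.union_subset hc.1 hc.2)
      have hz : ∀ i : X, (if J' ∪ J'' ∪ {i} ⊆ J then (1 : ℝ) else 0) = 0 := by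
        intro i
        rw [if_neg]
        intro hc
        exact h (Finset.Subset.trans Finset.subset_union_left hc)
      simp only [hz, mul_zero, if_neg h, Finset.sum_const_zero, sub_zero]
      by_cases h1' : J' ⊆ J
      · have h2 : ¬ J'' ⊆ J := fun hc => h1 ⟨h1', hc⟩
        simp [h1', h2]
      · simp [h1']
  refine ⟨heq, ?_⟩
  rw [heq]
  exact smul_vecMulVec_self_posSemidef _ (by linarith) _
end

section
/- For a 0/1 integer linear program ILP = min{c^T x : x ∈ {0,1}^n, Ax ≥ b}, the (n+1)-st step of the Lasserre hierarchy equals ILP: any y : 𝒫([n]) → ℝ with y(∅) = 1, M_n(y) ⪰ 0, and M^j_n(y) ⪰ 0 for all rows j, satisfies ∑_i c_i y({i}) ≥ ILP, and the minimum over such y equals ILP. -/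
open Finset Matrix

namespace Lasserre7Aux

variable {n : ℕ}


lemma alt_sum (U : Finset (Fin n)) :
    ∑ T ∈ U.powerset, (-1:ℝ)^T.card = if U = ∅ then 1 else 0 := by
  have h := Finset.sum_powerset_neg_one_pow_card (x := U)
  have : ((∑ T ∈ U.powerset, (-1:ℤ)^T.card : ℤ) : ℝ) = ∑ T ∈ U.powerset, (-1:ℝ)^T.card := by
    push_cast; rfl
  rw [← this, h]; split_ifs <;> norm_num

lemma alt_sum_compl (U : Finset (Fin n)) :
    ∑ T ∈ U.powerset, (-1:ℝ)^(U \ T).card = if U = ∅ then 1 else 0 := by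
  rw [← alt_sum U]
  refine Finset.sum_nbij' (fun T => U \ T) (fun T => U \ T) ?_ ?_ ?_ ?_ ?_
  · intro T hT; simp [Finset.mem_powerset]
  · intro T hT; simp [Finset.mem_powerset]
  · intro T hT; exact Finset.sdiff_sdiff_eq_self (Finset.mem_powerset.1 hT)
  · intro T hT; exact Finset.sdiff_sdiff_eq_self (Finset.mem_powerset.1 hT)
  · intro T hT; rfl

/-- interval alternating sum, upper-difference sign -/
lemma sum_interval (J S : Finset (Fin n)) (hJS : J ⊆ S) :
    ∑ K ∈ univ.filter (fun K => J ⊆ K ∧ K ⊆ S), (-1:ℝ)^(S \ K).card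
      = if S = J then 1 else 0 := by
  have hbij : ∑ K ∈ univ.filter (fun K => J ⊆ K ∧ K ⊆ S), (-1:ℝ)^(S \ K).card
      = ∑ T ∈ (S \ J).powerset, (-1:ℝ)^((S \ J) \ T).card := by
    refine Finset.sum_nbij' (fun K => K \ J) (fun T => J ∪ T) ?_ ?_ ?_ ?_ ?_
    · intro K hK; simp only [mem_filter, mem_univ, true_and] at hK
      exact Finset.mem_powerset.2 (Finset.sdiff_subset_sdiff hK.2 (Finset.Subset.refl J))
    · intro T hT; simp only [mem_powerset] at hT
      simp only [mem_filter, mem_univ, true_and]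
      exact ⟨Finset.subset_union_left, Finset.union_subset hJS (hT.trans (Finset.sdiff_subset))⟩
    · intro K hK; simp only [mem_filter, mem_univ, true_and] at hK
      exact Finset.union_sdiff_of_subset hK.1
    · intro T hT; simp only [mem_powerset] at hT
      show (J ∪ T) \ J = T
      exact Finset.union_sdiff_cancel_left
        (Finset.disjoint_left.2 fun a haJ haT => (Finset.mem_sdiff.1 (hT haT)).2 haJ)
    · intro K hK; simp only [mem_filter, mem_univ, true_and] at hK
      have hset : (S \ J) \ (K \ J) = S \ K := by
        ext a
        simp only [Finset.mem_sdiff]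
        constructor
        · rintro ⟨⟨haS, haJ⟩, hh⟩; exact ⟨haS, fun haK => hh ⟨haK, haJ⟩⟩
        · rintro ⟨haS, haK⟩; exact ⟨⟨haS, fun haJ => haK (hK.1 haJ)⟩, fun hh => haK hh.1⟩
      show ((-1:ℝ))^(S \ K).card = ((-1:ℝ))^((S \ J) \ (K \ J)).card
      rw [hset]
  rw [hbij, alt_sum_compl]
  by_cases h : S = J
  · subst h; simp
  · have hne : S \ J ≠ ∅ := fun he =>
      h (Finset.Subset.antisymm (Finset.sdiff_eq_empty_iff_subset.1 he) hJS)
    rw [if_neg hne, if_neg h]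

/-- interval alternating sum, lower-difference sign -/
lemma sum_interval' (K S : Finset (Fin n)) :
    ∑ J ∈ univ.filter (fun J => K ⊆ J ∧ J ⊆ S), (-1:ℝ)^(J \ K).card
      = if K = S then 1 else 0 := by
  by_cases hKS : K ⊆ S
  · have hbij : ∑ J ∈ univ.filter (fun J => K ⊆ J ∧ J ⊆ S), (-1:ℝ)^(J \ K).card
        = ∑ T ∈ (S \ K).powerset, (-1:ℝ)^T.card := by
      refine Finset.sum_nbij' (fun J => J \ K) (fun T => K ∪ T) ?_ ?_ ?_ ?_ ?_
      · intro J hJ; simp only [mem_filter, mem_univ, true_and] at hJ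
        exact Finset.mem_powerset.2 (Finset.sdiff_subset_sdiff hJ.2 (Finset.Subset.refl K))
      · intro T hT; simp only [mem_powerset] at hT
        simp only [mem_filter, mem_univ, true_and]
        exact ⟨Finset.subset_union_left, Finset.union_subset hKS (hT.trans Finset.sdiff_subset)⟩
      · intro J hJ; simp only [mem_filter, mem_univ, true_and] at hJ
        exact Finset.union_sdiff_of_subset hJ.1
      · intro T hT; simp only [mem_powerset] at hT
        show (K ∪ T) \ K = T
        exact Finset.union_sdiff_cancel_left
          (Finset.disjoint_left.2 fun a haK haT => (Finset.mem_sdiff.1 (hT haT)).2 haK)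
      · intro J hJ; rfl
    rw [hbij, alt_sum]
    by_cases h : K = S
    · subst h; simp
    · have hne : S \ K ≠ ∅ := fun he =>
        h (Finset.Subset.antisymm hKS (Finset.sdiff_eq_empty_iff_subset.1 he))
      rw [if_neg hne, if_neg h]
  · have hne : K ≠ S := fun h => hKS (by rw [h])
    rw [Finset.sum_eq_zero, if_neg hne]
    intro J hJ
    simp only [mem_filter, mem_univ, true_and] at hJ
    exact absurd (hJ.1.trans hJ.2) hKS


noncomputable def mob (z : Finset (Fin n) → ℝ) (K : Finset (Fin n)) : ℝ :=
  ∑ S ∈ univ.filter (fun S => K ⊆ S), (-1:ℝ)^(S \ K).card * z S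

lemma mob_inv (z : Finset (Fin n) → ℝ) (J : Finset (Fin n)) :
    ∑ K ∈ univ.filter (fun K => J ⊆ K), mob z K = z J := by
  have step1 : ∑ K ∈ univ.filter (fun K => J ⊆ K), mob z K
      = ∑ S : Finset (Fin n), ∑ K : Finset (Fin n),
          (if J ⊆ K ∧ K ⊆ S then (-1:ℝ)^(S \ K).card * z S else 0) := by
    rw [Finset.sum_filter]
    rw [Finset.sum_comm]
    refine Finset.sum_congr rfl fun K _ => ?_
    by_cases hJK : J ⊆ K
    · rw [if_pos hJK]
      unfold mob
      rw [Finset.sum_filter]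
      refine Finset.sum_congr rfl fun S _ => ?_
      by_cases hKS : K ⊆ S
      · rw [if_pos hKS, if_pos ⟨hJK, hKS⟩]
      · rw [if_neg hKS, if_neg (fun h => hKS h.2)]
    · rw [if_neg hJK, Finset.sum_eq_zero]
      intro S _; rw [if_neg (fun h => hJK h.1)]
  rw [step1]
  have step2 : ∀ S : Finset (Fin n), ∑ K : Finset (Fin n),
      (if J ⊆ K ∧ K ⊆ S then (-1:ℝ)^(S \ K).card * z S else 0)
      = if S = J then z J else 0 := by
    intro S
    by_cases hJS : J ⊆ S
    · have : ∑ K : Finset (Fin n), (if J ⊆ K ∧ K ⊆ S then (-1:ℝ)^(S \ K).card * z S else 0)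
          = (∑ K ∈ univ.filter (fun K => J ⊆ K ∧ K ⊆ S), (-1:ℝ)^(S \ K).card) * z S := by
        rw [Finset.sum_filter, Finset.sum_mul]
        refine Finset.sum_congr rfl fun K _ => ?_
        split_ifs <;> simp
      rw [this, sum_interval J S hJS]
      split_ifs with h
      · subst h; simp
      · simp
    · rw [Finset.sum_eq_zero, if_neg (fun h => hJS (by rw [h]))]
      intro K _
      rw [if_neg (fun h => hJS (h.1.trans h.2))]
  rw [Finset.sum_congr rfl fun S _ => step2 S]
  simp


noncomputable def Zmat (n : ℕ) : Matrix (Finset (Fin n)) (Finset (Fin n)) ℝ :=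
  Matrix.of fun J K => if J ⊆ K then 1 else 0

noncomputable def Wmat (n : ℕ) : Matrix (Finset (Fin n)) (Finset (Fin n)) ℝ :=
  Matrix.of fun K J => if K ⊆ J then (-1:ℝ)^(J \ K).card else 0

lemma WZ_eq_one : Wmat n * Zmat n = 1 := by
  ext K S
  rw [Matrix.mul_apply, Matrix.one_apply]
  have h : ∀ J : Finset (Fin n), Wmat n K J * Zmat n J S
      = if K ⊆ J ∧ J ⊆ S then (-1:ℝ)^(J \ K).card else 0 := by
    intro J
    simp only [Wmat, Zmat, Matrix.of_apply]
    by_cases h1 : K ⊆ J <;> by_cases h2 : J ⊆ S <;> simp [h1, h2]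
  rw [Finset.sum_congr rfl fun J _ => h J, ← Finset.sum_filter, sum_interval']

lemma moment_eq (z : Finset (Fin n) → ℝ) :
    (Matrix.of fun J J' : Finset (Fin n) => z (J ∪ J'))
      = Zmat n * Matrix.diagonal (mob z) * (Zmat n)ᵀ := by
  ext J J'
  rw [Matrix.mul_apply]
  have h : ∀ K : Finset (Fin n), (Zmat n * Matrix.diagonal (mob z)) J K * (Zmat n)ᵀ K J'
      = if J ∪ J' ⊆ K then mob z K else 0 := by
    intro K
    rw [Matrix.mul_diagonal, Matrix.transpose_apply]
    simp only [Zmat, Matrix.of_apply]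
    by_cases h1 : J ⊆ K <;> by_cases h2 : J' ⊆ K <;>
      simp [h1, h2, Finset.union_subset_iff]
  rw [Finset.sum_congr rfl fun K _ => h K, ← Finset.sum_filter, mob_inv]
  rfl

lemma mob_nonneg {z : Finset (Fin n) → ℝ}
    (hz : (Matrix.of fun J J' : Finset (Fin n) => z (J ∪ J')).PosSemidef)
    (K : Finset (Fin n)) : 0 ≤ mob z K := by
  have hdiag : Matrix.diagonal (mob z)
      = Wmat n * (Matrix.of fun J J' : Finset (Fin n) => z (J ∪ J')) * (Wmat n)ᵀ := by
    rw [moment_eq z]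
    calc Matrix.diagonal (mob z)
        = (Wmat n * Zmat n) * Matrix.diagonal (mob z) * (Wmat n * Zmat n)ᵀ := by
          rw [WZ_eq_one]; simp
      _ = Wmat n * (Zmat n * Matrix.diagonal (mob z) * (Zmat n)ᵀ) * (Wmat n)ᵀ := by
          rw [Matrix.transpose_mul]
          noncomm_ring
  have hpsd : (Matrix.diagonal (mob z)).PosSemidef := by
    rw [hdiag]
    have h := hz.mul_mul_conjTranspose_same (Wmat n)
    rwa [Matrix.conjTranspose_eq_transpose_of_trivial] at h
  have h2 := hpsd.dotProduct_mulVec_nonneg (Pi.single K 1)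
  simpa [Matrix.mulVec_single, dotProduct, Pi.single_apply] using h2


lemma mob_shift (y : Finset (Fin n) → ℝ) (i : Fin n) (K : Finset (Fin n)) :
    ∑ S ∈ univ.filter (fun S => K ⊆ S), (-1:ℝ)^(S \ K).card * y (S ∪ {i})
      = if i ∈ K then mob y K else 0 := by
  by_cases hi : i ∈ K
  · rw [if_pos hi]
    refine Finset.sum_congr rfl fun S hS => ?_
    have hiS : i ∈ S := (Finset.mem_filter.1 hS).2 hi
    rw [Finset.union_eq_left.2 (Finset.singleton_subset_iff.2 hiS)]
  · rw [if_neg hi]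
    set f : Finset (Fin n) → ℝ := fun S => (-1:ℝ)^(S \ K).card * y (S ∪ {i}) with hf
    have hsplit := Finset.sum_filter_add_sum_filter_not
      (univ.filter (fun S => K ⊆ S)) (fun S => i ∈ S) f
    rw [← hsplit]
    have hbij : ∑ S ∈ (univ.filter (fun S => K ⊆ S)).filter (fun S => i ∈ S), f S
        = ∑ S ∈ (univ.filter (fun S => K ⊆ S)).filter (fun S => ¬ i ∈ S), (-(f S)) := by
      refine Finset.sum_nbij' (fun S => S.erase i) (fun S => insert i S) ?_ ?_ ?_ ?_ ?_
      · intro S hS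
        simp only [Finset.mem_filter, Finset.mem_univ, true_and] at hS ⊢
        exact ⟨Finset.subset_erase.2 ⟨hS.1, hi⟩, Finset.notMem_erase i S⟩
      · intro S hS
        simp only [Finset.mem_filter, Finset.mem_univ, true_and] at hS ⊢
        exact ⟨hS.1.trans (Finset.subset_insert i S), Finset.mem_insert_self i S⟩
      · intro S hS
        simp only [Finset.mem_filter, Finset.mem_univ, true_and] at hS
        exact Finset.insert_erase hS.2
      · intro S hS
        simp only [Finset.mem_filter, Finset.mem_univ, true_and] at hS
        exact Finset.erase_insert hS.2
      · intro S hS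
        simp only [Finset.mem_filter, Finset.mem_univ, true_and] at hS
        have h1 : S.erase i ∪ {i} = S ∪ {i} := by
          ext a
          simp only [Finset.mem_union, Finset.mem_erase, Finset.mem_singleton]
          by_cases ha : a = i <;> simp [ha]
        have h2 : S \ K = insert i (S.erase i \ K) := by
          ext a
          simp only [Finset.mem_insert, Finset.mem_sdiff, Finset.mem_erase]
          by_cases ha : a = i
          · subst ha; simp [hS.2, hi]
          · simp [ha]
        have h3 : i ∉ S.erase i \ K := fun h => (Finset.notMem_erase i S) (Finset.mem_sdiff.1 h).1
        rw [hf]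
        simp only
        rw [h2, Finset.card_insert_of_notMem h3, pow_succ]
        have h4 : S.erase i \ K = (S \ K).erase i := Finset.erase_sdiff_comm S K i ▸ rfl
        rw [← h1]
        ring
    rw [hbij, ← Finset.sum_add_distrib]
    simp


lemma mob_loc (y : Finset (Fin n) → ℝ) (a : Fin n → ℝ) (β : ℝ) (K : Finset (Fin n)) :
    mob (fun S => (∑ i, a i * y (S ∪ {i})) - β * y S) K
      = ((∑ i ∈ K, a i) - β) * mob y K := by
  unfold mob
  have step1 : ∑ S ∈ univ.filter (fun S => K ⊆ S),
      (-1:ℝ)^(S \ K).card * ((∑ i, a i * y (S ∪ {i})) - β * y S)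
      = (∑ S ∈ univ.filter (fun S => K ⊆ S), ∑ i, a i * ((-1:ℝ)^(S \ K).card * y (S ∪ {i})))
        - β * ∑ S ∈ univ.filter (fun S => K ⊆ S), (-1:ℝ)^(S \ K).card * y S := by
    rw [Finset.mul_sum, ← Finset.sum_sub_distrib]
    refine Finset.sum_congr rfl fun S _ => ?_
    rw [mul_sub, Finset.mul_sum]
    congr 1
    · exact Finset.sum_congr rfl fun i _ => by ring
    · ring
  rw [step1, Finset.sum_comm]
  have step2 : ∀ i : Fin n, ∑ S ∈ univ.filter (fun S => K ⊆ S),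
      a i * ((-1:ℝ)^(S \ K).card * y (S ∪ {i})) = a i * (if i ∈ K then mob y K else 0) := by
    intro i
    rw [← Finset.mul_sum, mob_shift]
  rw [Finset.sum_congr rfl fun i _ => step2 i]
  have step3 : ∑ i : Fin n, a i * (if i ∈ K then mob y K else 0)
      = (∑ i ∈ K, a i) * mob y K := by
    rw [Finset.sum_mul]
    rw [← Finset.sum_filter_add_sum_filter_not univ (fun i => i ∈ K)
      (fun i => a i * (if i ∈ K then mob y K else 0))]
    have e1 : ∑ i ∈ univ.filter (fun i => i ∈ K), a i * (if i ∈ K then mob y K else 0)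
        = ∑ i ∈ univ.filter (fun i => i ∈ K), a i * mob y K :=
      Finset.sum_congr rfl fun i hi => by
        rw [if_pos (Finset.mem_filter.1 hi).2]
    have e2 : ∑ i ∈ univ.filter (fun i => ¬ i ∈ K), a i * (if i ∈ K then mob y K else 0) = 0 :=
      Finset.sum_eq_zero fun i hi => by
        rw [if_neg (Finset.mem_filter.1 hi).2, mul_zero]
    rw [e1, e2, add_zero]
    congr 1
    simp [Finset.filter_mem_eq_inter]
  rw [step3]
  have hm : (∑ S ∈ univ.filter (fun S => K ⊆ S), (-1:ℝ)^(S \ K).card * y S) = mob y K := rfl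
  rw [hm]
  ring


lemma prod01 (x : Fin n → ℝ) (hx : ∀ i, x i = 0 ∨ x i = 1) (S : Finset (Fin n)) :
    ∏ i ∈ S, x i = if ∀ i ∈ S, x i = 1 then 1 else 0 := by
  by_cases h : ∀ i ∈ S, x i = 1
  · rw [if_pos h, Finset.prod_eq_one h]
  · rw [if_neg h]
    push_neg at h
    obtain ⟨i, hiS, hi⟩ := h
    exact Finset.prod_eq_zero hiS ((hx i).resolve_right hi)

lemma prod_union01 (x : Fin n → ℝ) (hx : ∀ i, x i = 0 ∨ x i = 1) (S T : Finset (Fin n)) :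
    ∏ i ∈ S ∪ T, x i = (∏ i ∈ S, x i) * (∏ i ∈ T, x i) := by
  rw [prod01 x hx, prod01 x hx, prod01 x hx]
  by_cases hS : ∀ i ∈ S, x i = 1 <;> by_cases hT : ∀ i ∈ T, x i = 1
  · rw [if_pos hS, if_pos hT, if_pos (Finset.forall_mem_union.2 ⟨hS, hT⟩), mul_one]
  · rw [if_pos hS, if_neg hT, mul_zero,
      if_neg (fun h => hT fun i hi => (Finset.forall_mem_union.1 h).2 i hi)]
  · rw [if_neg hS, zero_mul,
      if_neg (fun h => hS fun i hi => (Finset.forall_mem_union.1 h).1 i hi)]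
  · rw [if_neg hS, zero_mul,
      if_neg (fun h => hS fun i hi => (Finset.forall_mem_union.1 h).1 i hi)]

lemma psd_of_outer {I : Type*} [Fintype I] [DecidableEq I]
    (M : Matrix I I ℝ) (t : ℝ) (ht : 0 ≤ t) (v : I → ℝ)
    (h : ∀ J J', M J J' = t * (v J * v J')) : M.PosSemidef := by
  refine Matrix.PosSemidef.of_dotProduct_mulVec_nonneg ?_ ?_
  · ext J J'
    rw [Matrix.conjTranspose_apply, h, h]
    simp only [star_trivial]
    ring
  · intro u
    have key : (star u) ⬝ᵥ (M *ᵥ u) = t * ((∑ J, v J * u J) * (∑ J, v J * u J)) := by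
      simp only [dotProduct, Matrix.mulVec, star_trivial, Pi.star_apply]
      rw [Finset.sum_mul_sum, Finset.mul_sum]
      refine Finset.sum_congr rfl fun J _ => ?_
      rw [Finset.mul_sum, Finset.mul_sum]
      refine Finset.sum_congr rfl fun J' _ => ?_
      rw [h]
      ring
    rw [key]
    exact mul_nonneg ht (mul_self_nonneg _)

end Lasserre7Aux

open Finset Lasserre7Aux

/-- the (n+1)-st step of the Lasserre hierarchy equals the 0/1 ILP value. -/
theorem lasserre_final_step_equals_ilp (m n : ℕ)
    (A : Matrix (Fin m) (Fin n) ℝ) (b : Fin m → ℝ) (c : Fin n → ℝ) (ILP : ℝ)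
    (hILP : IsLeast {v : ℝ | ∃ x : Fin n → ℝ, (∀ i, x i = 0 ∨ x i = 1) ∧
        (∀ j, b j ≤ ∑ i, A j i * x i) ∧ v = ∑ i, c i * x i} ILP) :
    IsLeast {v : ℝ | ∃ y : Finset (Fin n) → ℝ, y ∅ = 1 ∧
        (Matrix.of fun J J' : Finset (Fin n) => y (J ∪ J')).PosSemidef ∧
        (∀ j : Fin m, (Matrix.of fun J J' : Finset (Fin n) =>
            (∑ i, A j i * y (J ∪ J' ∪ {i})) - b j * y (J ∪ J')).PosSemidef) ∧
        v = ∑ i, c i * y {i}} ILP := by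
  constructor
  · -- ILP is attained by a moment vector coming from an optimal 0/1 point
    obtain ⟨x, hx01, hfeas, hval⟩ := hILP.1
    refine ⟨fun S => ∏ i ∈ S, x i, by simp, ?_, ?_, ?_⟩
    · refine psd_of_outer _ 1 zero_le_one (fun S => ∏ i ∈ S, x i) fun J J' => ?_
      simp only [Matrix.of_apply]
      rw [prod_union01 x hx01, one_mul]
    · intro j
      refine psd_of_outer _ ((∑ i, A j i * x i) - b j) (sub_nonneg.2 (hfeas j))
        (fun S => ∏ i ∈ S, x i) fun J J' => ?_
      simp only [Matrix.of_apply]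
      have h1 : ∀ i : Fin n, (∏ k ∈ J ∪ J' ∪ {i}, x k)
          = (∏ k ∈ J, x k) * (∏ k ∈ J', x k) * x i := by
        intro i
        rw [prod_union01 x hx01, prod_union01 x hx01, Finset.prod_singleton]
      rw [prod_union01 x hx01,
        Finset.sum_congr rfl fun i (_ : i ∈ univ) => by rw [h1 i]]
      rw [sub_mul, Finset.sum_mul]
      congr 1
      exact Finset.sum_congr rfl fun i _ => by ring
    · rw [hval]
      exact Finset.sum_congr rfl fun i _ => by simp
  · -- every Lasserre-feasible y has value at least ILP
    rintro v ⟨y, hy0, hM, hMj, hv⟩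
    have hlam : ∀ K, 0 ≤ mob y K := fun K => mob_nonneg hM K
    have hmuK : ∀ (j : Fin m) (K : Finset (Fin n)),
        0 ≤ ((∑ i ∈ K, A j i) - b j) * mob y K := by
      intro j K
      rw [← mob_loc y (fun i => A j i) (b j) K]
      exact mob_nonneg (z := fun S => (∑ i, A j i * y (S ∪ {i})) - b j * y S) (hMj j) K
    have hsum1 : ∑ K : Finset (Fin n), mob y K = 1 := by
      have h := mob_inv y ∅
      rw [Finset.filter_true_of_mem (fun K _ => Finset.empty_subset K)] at h
      exact h.trans hy0
    have hKval : ∀ K : Finset (Fin n), mob y K * ILP ≤ mob y K * (∑ i ∈ K, c i) := by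
      intro K
      rcases (hlam K).eq_or_lt with h0 | hpos
      · rw [← h0, zero_mul, zero_mul]
      · have hfeasK : ∀ j, b j ≤ ∑ i ∈ K, A j i := by
          intro j
          nlinarith [hmuK j K, hpos]
        have hmem : (∑ i ∈ K, c i) ∈ {v : ℝ | ∃ x : Fin n → ℝ, (∀ i, x i = 0 ∨ x i = 1) ∧
            (∀ j, b j ≤ ∑ i, A j i * x i) ∧ v = ∑ i, c i * x i} := by
          refine ⟨fun i => if i ∈ K then 1 else 0, ?_, ?_, ?_⟩
          · intro i; by_cases h : i ∈ K <;> simp [h]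
          · intro j
            have : ∑ i, A j i * (if i ∈ K then (1:ℝ) else 0) = ∑ i ∈ K, A j i := by
              simp [mul_ite, mul_one, mul_zero, Finset.sum_ite_mem]
            rw [this]; exact hfeasK j
          · have : ∑ i, c i * (if i ∈ K then (1:ℝ) else 0) = ∑ i ∈ K, c i := by
              simp [mul_ite, mul_one, mul_zero, Finset.sum_ite_mem]
            rw [this]
        exact mul_le_mul_of_nonneg_left (hILP.2 hmem) (hlam K)
    have hy_single : ∀ i : Fin n, y {i} = ∑ K ∈ univ.filter (fun K => i ∈ K), mob y K := by
      intro i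
      have h := mob_inv y {i}
      rw [show (univ.filter fun K => ({i} : Finset (Fin n)) ⊆ K)
          = univ.filter (fun K => i ∈ K) from
        Finset.filter_congr fun K _ => by rw [Finset.singleton_subset_iff]] at h
      exact h.symm
    rw [hv]
    calc ILP = ∑ K : Finset (Fin n), mob y K * ILP := by
          rw [← Finset.sum_mul, hsum1, one_mul]
      _ ≤ ∑ K : Finset (Fin n), mob y K * (∑ i ∈ K, c i) :=
          Finset.sum_le_sum fun K _ => hKval K
      _ = ∑ i, c i * y {i} := by
          have e1 : ∀ K : Finset (Fin n), mob y K * (∑ i ∈ K, c i)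
              = ∑ i : Fin n, (if i ∈ K then c i * mob y K else 0) := by
            intro K
            rw [Finset.mul_sum, ← Finset.sum_filter]
            rw [show univ.filter (fun i => i ∈ K) = K by
              simp [Finset.filter_mem_eq_inter]]
            exact Finset.sum_congr rfl fun i _ => by ring
          rw [Finset.sum_congr rfl fun K (_ : K ∈ univ) => e1 K, Finset.sum_comm]
          refine Finset.sum_congr rfl fun i _ => ?_
          rw [hy_single i, Finset.mul_sum, Finset.sum_filter]
end

section
/- If y : 𝒫([n]) → ℝ satisfies y(∅) = 1, M_n(y) ⪰ 0, and all localizing matrices M^j_n(y) ⪰ 0 (j = 1, …, m), and α_J > 0 in the expansion y = ∑_J α_J χ^J, then the 0/1 point x^J defined by x^J_i = χ^J({i}) satisfies A x^J ≥ b. -/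
open Finset in
lemma sum_z_aux {n : ℕ} (J K : Finset (Fin n)) :
    ∑ S : Finset (Fin n),
      (if J ⊆ S then ((-1 : ℝ)) ^ (S.card - J.card) else 0) *
      (if S ⊆ K then (1 : ℝ) else 0) = if K = J then 1 else 0 := by
  classical
  have h1 : ∀ S : Finset (Fin n),
      (if J ⊆ S then ((-1 : ℝ)) ^ (S.card - J.card) else 0) *
      (if S ⊆ K then (1 : ℝ) else 0)
      = if S ∈ Finset.Icc J K then ((-1 : ℝ)) ^ (S.card - J.card) else 0 := by
    intro S
    simp only [Finset.mem_Icc, Finset.le_eq_subset]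
    split_ifs <;> simp_all
  rw [Finset.sum_congr rfl fun S _ => h1 S]
  rw [Finset.sum_ite_mem, Finset.univ_inter]
  by_cases hJK : J ⊆ K
  · have : ∑ S ∈ Finset.Icc J K, ((-1 : ℝ)) ^ (S.card - J.card)
        = ∑ T ∈ (K \ J).powerset, ((-1 : ℝ)) ^ T.card := by
      refine Finset.sum_nbij' (fun S => S \ J) (fun T => T ∪ J) ?_ ?_ ?_ ?_ ?_
      · intro S hS
        rw [Finset.mem_Icc] at hS
        rw [Finset.mem_powerset]
        exact sdiff_subset_sdiff hS.2 le_rfl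
      · intro T hT
        rw [Finset.mem_powerset] at hT
        rw [Finset.mem_Icc]
        constructor
        · exact Finset.subset_union_right
        · exact Finset.union_subset (hT.trans (Finset.sdiff_subset)) hJK
      · intro S hS
        rw [Finset.mem_Icc] at hS
        exact Finset.sdiff_union_of_subset hS.1
      · intro T hT
        rw [Finset.mem_powerset] at hT
        have hd : Disjoint T J :=
          Finset.disjoint_of_subset_left hT Finset.sdiff_disjoint
        show (T ∪ J) \ J = T
        rw [Finset.union_sdiff_distrib, Finset.sdiff_self, Finset.union_empty,
          Finset.sdiff_eq_self_iff_disjoint]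
        exact hd
      · intro S hS
        rw [Finset.mem_Icc] at hS
        rw [Finset.card_sdiff_of_subset hS.1]
    rw [this]
    have hcast := @Finset.sum_powerset_neg_one_pow_card (Fin n) _ (K \ J)
    have : ∑ T ∈ (K \ J).powerset, ((-1 : ℝ)) ^ T.card
        = ((∑ T ∈ (K \ J).powerset, ((-1 : ℤ)) ^ T.card : ℤ) : ℝ) := by
      push_cast; rfl
    rw [this, hcast]
    by_cases h : K = J
    · simp [h]
    · have : K \ J ≠ ∅ := by
        intro he
        exact h (Finset.Subset.antisymm (by rwa [← Finset.sdiff_eq_empty_iff_subset]) hJK)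
      simp [this, h]
  · have hne : K ≠ J := fun h => hJK (h ▸ le_rfl)
    rw [if_neg hne]
    apply Finset.sum_eq_zero
    intro S hS
    rw [Finset.mem_Icc] at hS
    exact absurd (hS.1.trans hS.2) hJK


/-- if y is feasible for the final Lasserre step and α_J > 0 in the
χ-expansion of y, then the 0/1 point x^J satisfies A x^J ≥ b. -/
theorem support_points_feasible (m n : ℕ)
    (A : Matrix (Fin m) (Fin n) ℝ) (b : Fin m → ℝ)
    (y : Finset (Fin n) → ℝ) (hy0 : y ∅ = 1)
    (hM : (Matrix.of fun J J' : Finset (Fin n) => y (J ∪ J')).PosSemidef)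
    (hMj : ∀ j : Fin m, (Matrix.of fun J J' : Finset (Fin n) =>
        (∑ i, A j i * y (J ∪ J' ∪ {i})) - b j * y (J ∪ J')).PosSemidef)
    (α : Finset (Fin n) → ℝ)
    (hexp : y = ∑ J : Finset (Fin n), α J •
        (fun J' : Finset (Fin n) => if J' ⊆ J then (1 : ℝ) else 0))
    (J : Finset (Fin n)) (hJ : 0 < α J) :
    ∀ j : Fin m, b j ≤ ∑ i, A j i * (if i ∈ J then (1 : ℝ) else 0) := by
  classical
  have hy : ∀ T : Finset (Fin n), y T = ∑ K : Finset (Fin n),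
      α K * (if T ⊆ K then (1 : ℝ) else 0) := by
    intro T
    rw [hexp]
    simp [Finset.sum_apply]
  intro j
  set z : Finset (Fin n) → ℝ :=
    fun S => if J ⊆ S then ((-1 : ℝ)) ^ (S.card - J.card) else 0 with hz
  set F : Finset (Fin n) → ℝ :=
    fun K => (∑ i, A j i * (if i ∈ K then (1 : ℝ) else 0)) - b j with hF
  set g : Finset (Fin n) → Finset (Fin n) → ℝ :=
    fun K S => z S * (if S ⊆ K then (1 : ℝ) else 0) with hg
  have hgsum : ∀ K, ∑ S : Finset (Fin n), g K S = if K = J then 1 else 0 :=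
    fun K => sum_z_aux J K
  have hentry : ∀ S S' : Finset (Fin n),
      z S * (((∑ i, A j i * y (S ∪ S' ∪ {i})) - b j * y (S ∪ S')) * z S')
      = ∑ K : Finset (Fin n), α K * F K * (g K S * g K S') := by
    intro S S'
    have hsub : ∀ K : Finset (Fin n), ∀ i : Fin n,
        (S ∪ S' ∪ {i} ⊆ K) ↔ (S ⊆ K ∧ S' ⊆ K ∧ i ∈ K) := by
      intro K i
      rw [Finset.union_subset_iff, Finset.union_subset_iff, Finset.singleton_subset_iff, and_assoc]
    have h1 : (∑ i, A j i * y (S ∪ S' ∪ {i})) - b j * y (S ∪ S')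
        = ∑ K : Finset (Fin n), α K * F K *
            ((if S ⊆ K then (1:ℝ) else 0) * (if S' ⊆ K then (1:ℝ) else 0)) := by
      simp only [hy, Finset.mul_sum]
      rw [Finset.sum_comm, ← Finset.sum_sub_distrib]
      refine Finset.sum_congr rfl fun K _ => ?_
      by_cases hS : S ⊆ K <;> by_cases hS' : S' ⊆ K <;>
        simp [hsub, hS, hS', Finset.insert_subset_iff, Finset.union_subset_iff, hF, Finset.sum_sub_distrib,
          Finset.mul_sum, mul_sub, mul_comm, mul_assoc, mul_left_comm]
    rw [h1, Finset.sum_mul, Finset.mul_sum]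
    refine Finset.sum_congr rfl fun K _ => ?_
    simp only [hg]
    ring
  have hq := (hMj j).dotProduct_mulVec_nonneg z
  simp only [Matrix.mulVec, dotProduct, Matrix.of_apply, star_trivial] at hq
  have hform : ∑ S : Finset (Fin n), z S *
      ∑ S' : Finset (Fin n), ((∑ i, A j i * y (S ∪ S' ∪ {i})) - b j * y (S ∪ S')) * z S'
      = α J * F J := by
    calc ∑ S : Finset (Fin n), z S *
        ∑ S' : Finset (Fin n), ((∑ i, A j i * y (S ∪ S' ∪ {i})) - b j * y (S ∪ S')) * z S'
        = ∑ S : Finset (Fin n), ∑ S' : Finset (Fin n),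
            ∑ K : Finset (Fin n), α K * F K * (g K S * g K S') := by
          refine Finset.sum_congr rfl fun S _ => ?_
          rw [Finset.mul_sum]
          exact Finset.sum_congr rfl fun S' _ => hentry S S'
      _ = ∑ K : Finset (Fin n), α K * F K *
            ((∑ S : Finset (Fin n), g K S) * (∑ S' : Finset (Fin n), g K S')) := by
          have hKfac : ∀ K : Finset (Fin n),
              α K * F K * ((∑ S : Finset (Fin n), g K S) * (∑ S' : Finset (Fin n), g K S'))
              = ∑ S : Finset (Fin n), ∑ S' : Finset (Fin n), α K * F K * (g K S * g K S') := by
            intro K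
            rw [Finset.sum_mul_sum, Finset.mul_sum]
            exact Finset.sum_congr rfl fun S _ => by rw [Finset.mul_sum]
          rw [Finset.sum_congr rfl fun S _ => Finset.sum_comm]
          rw [Finset.sum_comm]
          exact Finset.sum_congr rfl fun K _ => (hKfac K).symm
      _ = α J * F J := by
          rw [Finset.sum_congr rfl fun K _ => by rw [hgsum K]]
          rw [Finset.sum_eq_single J] <;> simp +contextual
  rw [hform] at hq
  have hF' : 0 ≤ F J := by
    by_contra h
    push_neg at h
    nlinarith
  simp only [hF] at hF'
  linarith
end
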